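/- Let F be a finite family of functions f : X → {0,1} on finite nonempty X, L : X → {0,1}, and suppose no pointwise majority of any k functions from F equals L on all of X, where k = ⌈ln|X|/(2δ²)⌉ + 1. Then the value of the misclassification game (payoff 1 iff f(x) ≠ L(x), F minimizing) is strictly greater than 1/2 − δ. -/

import Mathlib

open Finset
open scoped Classical

set_option maxHeartbeats 1000000 in
theorem no_majority_lower_bounds_value {X : Type*} [Fintype X] [Nonempty X]
    (F : Finset (X → Bool)) (hF : F.Nonempty) (L : X → Bool)
    (δ : ℝ) (hδ : 0 < δ)
    (k : ℕ) (hkdef : k = ⌈Real.log (Fintype.card X) / (2 * δ ^ 2)⌉₊ + 1)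
    (hmaj : ∀ S : Fin k → ↥F, ∃ x : X,
      ¬ (k < 2 * (univ.filter fun m : Fin k => (S m).1 x = L x).card)) :
    1 / 2 - δ < ⨅ p : stdSimplex ℝ ↥F, ⨆ x : X,
      ∑ f : ↥F, p.1 f * (if f.1 x ≠ L x then (1 : ℝ) else 0) := by
  classical
  have hn1 : (1:ℝ) ≤ (Fintype.card X : ℝ) := by exact_mod_cast Fintype.card_pos
  set lgn : ℝ := Real.log (Fintype.card X) with hlgn
  have hlog : 0 ≤ lgn := Real.log_nonneg hn1
  have hδ2 : (0:ℝ) < δ ^ 2 := by positivity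
  set D : ℝ := lgn + 2 * δ ^ 2 with hD
  have hDpos : 0 < D := by nlinarith
  set δ' : ℝ := Real.sqrt (δ ^ 2 * (lgn + δ ^ 2) / D) with hδ'
  have hnum : 0 < δ ^ 2 * (lgn + δ ^ 2) / D := by
    apply div_pos _ hDpos; nlinarith
  have hδ'pos : 0 < δ' := Real.sqrt_pos.mpr hnum
  have hδ'sq : δ' ^ 2 = δ ^ 2 * (lgn + δ ^ 2) / D := Real.sq_sqrt hnum.le
  have hδ'lt : δ' < δ := by
    have h1 : δ' ^ 2 < δ ^ 2 := by
      rw [hδ'sq, div_lt_iff₀ hDpos]; nlinarith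
    nlinarith
  have hkR : D / (2 * δ ^ 2) ≤ (k : ℝ) := by
    have h1 : lgn / (2 * δ ^ 2) ≤ (⌈lgn / (2 * δ ^ 2)⌉₊ : ℝ) := Nat.le_ceil _
    have h2 : D / (2 * δ ^ 2) = lgn / (2 * δ ^ 2) + 1 := by
      field_simp; exact hD
    rw [hkdef]; push_cast; linarith
  have hkey : lgn < 2 * δ' ^ 2 * k := by
    have h2 : 2 * δ' ^ 2 * (D / (2 * δ ^ 2)) = lgn + δ ^ 2 := by
      rw [hδ'sq]; field_simp
    have h3 : 0 ≤ δ' ^ 2 := sq_nonneg _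
    nlinarith
  have hk0 : 0 < k := by rw [hkdef]; omega
  -- main claim
  have main : ∀ p : stdSimplex ℝ ↥F, ∃ x : X,
      1 / 2 - δ' ≤ ∑ f : ↥F, p.1 f * (if f.1 x ≠ L x then (1 : ℝ) else 0) := by
    intro p
    by_contra hcon
    push_neg at hcon
    have hp0 : ∀ f, 0 ≤ p.1 f := p.2.1
    have hp1 : ∑ f, p.1 f = 1 := p.2.2
    set q : X → ℝ := fun x => ∑ f : ↥F, p.1 f * (if f.1 x ≠ L x then (1 : ℝ) else 0) with hq
    have hq0 : ∀ x, 0 ≤ q x := by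
      intro x
      apply Finset.sum_nonneg
      intro f _
      have : (0:ℝ) ≤ (if f.1 x ≠ L x then (1 : ℝ) else 0) := by positivity
      exact mul_nonneg (hp0 f) this
    set a : ℝ := 2 * δ' with ha
    have ha0 : 0 < a := by positivity
    have ha1 : a < 1 := by
      by_contra h
      push_neg at h
      obtain ⟨x⟩ := (inferInstance : Nonempty X)
      have h1 := hcon x
      have h2 := hq0 x
      change q x < _ at h1
      linarith
    have hqle : ∀ x, q x ≤ (1 - a) / 2 := by
      intro x
      have h1 := hcon x
      change q x < _ at h1
      linarith
    set B : ℝ := (1 + a) / (1 - a) with hB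
    have h1a : 0 < 1 - a := by linarith
    have hB1 : 1 ≤ B := by rw [hB, le_div_iff₀ h1a]; linarith
    have hB0 : 0 < B := lt_of_lt_of_le one_pos hB1
    set sB : ℝ := Real.sqrt B with hsB
    have hsB0 : 0 < sB := Real.sqrt_pos.mpr hB0
    have hsBsq : sB ^ 2 = B := Real.sq_sqrt hB0.le
    set w : (Fin k → ↥F) → ℝ := fun S => ∏ m, p.1 (S m) with hw
    have hw0 : ∀ S, 0 ≤ w S := fun S => Finset.prod_nonneg (fun m _ => hp0 _)
    have hwsum : ∑ S : Fin k → ↥F, w S = 1 := by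
      have h := Finset.sum_prod_piFinset (univ : Finset ↥F) (fun (_ : Fin k) f => p.1 f)
      rw [Fintype.piFinset_univ] at h
      rw [hw, h]
      simp only [hp1, Finset.prod_const, one_pow]
    -- per-x Chernoff bound
    have bound1 : ∀ x : X,
        ∑ S ∈ univ.filter (fun S : Fin k → ↥F =>
          ¬ (k < 2 * (univ.filter fun m : Fin k => (S m).1 x = L x).card)), w S
          ≤ Real.exp (-(2 * δ' ^ 2 * k)) := by
      intro x
      set wr : (Fin k → ↥F) → ℕ :=
        fun S => (univ.filter fun m : Fin k => ¬ ((S m).1 x = L x)).card with hwr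
      set g : ↥F → ℝ := fun f => p.1 f * (if (f : X → Bool) x = L x then 1 else B) with hg
      have hgsum : ∑ f, g f = 1 + (B - 1) * q x := by
        have hpt : ∀ f : ↥F, g f = p.1 f + (B - 1) * (p.1 f * (if f.1 x ≠ L x then (1:ℝ) else 0)) := by
          intro f
          by_cases h : (f : X → Bool) x = L x
          · simp [hg, h]
          · simp [hg, h]; ring
        rw [Finset.sum_congr rfl (fun f _ => hpt f), Finset.sum_add_distrib, ← Finset.mul_sum, hp1, hq]
      have hprodg : ∀ S : Fin k → ↥F, ∏ m, g (S m) = w S * B ^ wr S := by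
        intro S
        rw [hg, hw, hwr]
        simp only
        rw [Finset.prod_mul_distrib]
        congr 1
        rw [Finset.prod_ite (fun _ => (1:ℝ)) (fun _ => B)]
        simp
      have hsum2 : ∑ S : Fin k → ↥F, w S * B ^ wr S = (1 + (B - 1) * q x) ^ k := by
        have h := Finset.sum_prod_piFinset (univ : Finset ↥F) (fun (_ : Fin k) f => g f)
        rw [Fintype.piFinset_univ] at h
        calc ∑ S : Fin k → ↥F, w S * B ^ wr S
            = ∑ S : Fin k → ↥F, ∏ m, g (S m) := by
              exact Finset.sum_congr rfl (fun S _ => (hprodg S).symm)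
          _ = ∏ _m : Fin k, ∑ f, g f := h
          _ = (1 + (B - 1) * q x) ^ k := by rw [hgsum]; simp
      have hbadwr : ∀ S : Fin k → ↥F,
          ¬ (k < 2 * (univ.filter fun m : Fin k => (S m).1 x = L x).card) →
          sB ^ k ≤ B ^ wr S := by
        intro S hS
        push_neg at hS
        have hcard : (univ.filter fun m : Fin k => (S m).1 x = L x).card + wr S = k := by
          rw [hwr]
          rw [Finset.card_filter_add_card_filter_not]
          simp
        have hk2 : k ≤ 2 * wr S := by omega
        have h1 : B ^ k ≤ B ^ (2 * wr S) := pow_le_pow_right₀ hB1 hk2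
        calc sB ^ k = Real.sqrt ((sB ^ k) ^ 2) := (Real.sqrt_sq (pow_nonneg hsB0.le _)).symm
          _ = Real.sqrt (B ^ k) := by rw [← pow_mul, mul_comm k 2, pow_mul, hsBsq]
          _ ≤ Real.sqrt (B ^ (2 * wr S)) := Real.sqrt_le_sqrt h1
          _ = B ^ wr S := by
              rw [mul_comm 2 (wr S), pow_mul, Real.sqrt_sq (pow_nonneg hB0.le _)]
      have hstep : (1 + (B - 1) * q x) / sB ≤ Real.exp (-(a ^ 2 / 2)) := by
        have hB1' : B - 1 = 2 * a / (1 - a) := by rw [hB]; field_simp; ring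
        have hBq : (B - 1) * q x ≤ a := by
          rw [hB1']
          calc 2 * a / (1 - a) * q x ≤ 2 * a / (1 - a) * ((1 - a) / 2) := by
                apply mul_le_mul_of_nonneg_left (hqle x) (by positivity)
            _ = a := by field_simp
        have hsqrt : (1 + a) / sB = Real.sqrt (1 - a ^ 2) := by
          have h1 : (1:ℝ) - a ^ 2 = ((1 + a) / sB) ^ 2 := by
            rw [div_pow, hsBsq, hB]
            field_simp
            ring
          rw [h1, Real.sqrt_sq (by positivity)]
        have h2 : (1 + (B - 1) * q x) / sB ≤ (1 + a) / sB := by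
          gcongr
        have h3 : Real.sqrt (1 - a ^ 2) ≤ Real.exp (-(a ^ 2 / 2)) := by
          have h4 : 1 - a ^ 2 ≤ Real.exp (-(a ^ 2)) := by
            have := Real.add_one_le_exp (-(a ^ 2))
            linarith
          calc Real.sqrt (1 - a ^ 2) ≤ Real.sqrt (Real.exp (-(a ^ 2))) := Real.sqrt_le_sqrt h4
            _ = Real.exp (-(a ^ 2) / 2) := (Real.exp_half _).symm
            _ = Real.exp (-(a ^ 2 / 2)) := by ring_nf
        calc (1 + (B - 1) * q x) / sB ≤ (1 + a) / sB := h2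
          _ = Real.sqrt (1 - a ^ 2) := hsqrt
          _ ≤ Real.exp (-(a ^ 2 / 2)) := h3
      have hratio0 : 0 ≤ (1 + (B - 1) * q x) / sB := by
        apply div_nonneg _ hsB0.le
        nlinarith [hq0 x, hB1]
      calc ∑ S ∈ univ.filter (fun S : Fin k → ↥F =>
              ¬ (k < 2 * (univ.filter fun m : Fin k => (S m).1 x = L x).card)), w S
          ≤ ∑ S ∈ univ.filter (fun S : Fin k → ↥F =>
              ¬ (k < 2 * (univ.filter fun m : Fin k => (S m).1 x = L x).card)),
              w S * B ^ wr S / sB ^ k := by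
            apply Finset.sum_le_sum
            intro S hS
            rw [Finset.mem_filter] at hS
            have h1 := hbadwr S hS.2
            rw [le_div_iff₀ (by positivity)]
            calc w S * sB ^ k ≤ w S * B ^ wr S := by
                  apply mul_le_mul_of_nonneg_left h1 (hw0 S)
              _ = w S * B ^ wr S := rfl
        _ ≤ ∑ S : Fin k → ↥F, w S * B ^ wr S / sB ^ k := by
            apply Finset.sum_le_sum_of_subset_of_nonneg (Finset.filter_subset _ _)
            intro S _ _
            exact div_nonneg (mul_nonneg (hw0 S) (pow_nonneg hB0.le _)) (pow_nonneg hsB0.le _)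
        _ = (1 + (B - 1) * q x) ^ k / sB ^ k := by rw [← Finset.sum_div, hsum2]
        _ = ((1 + (B - 1) * q x) / sB) ^ k := by rw [div_pow]
        _ ≤ (Real.exp (-(a ^ 2 / 2))) ^ k := pow_le_pow_left₀ hratio0 hstep k
        _ = Real.exp (-(2 * δ' ^ 2 * k)) := by
            rw [← Real.exp_nat_mul]
            congr 1
            rw [ha]
            ring
    -- combine
    set bad : X → Finset (Fin k → ↥F) := fun x => univ.filter (fun S : Fin k → ↥F =>
      ¬ (k < 2 * (univ.filter fun m : Fin k => (S m).1 x = L x).card)) with hbad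
    have hle : (1:ℝ) ≤ ∑ x : X, ∑ S ∈ bad x, w S := by
      calc (1:ℝ) = ∑ S : Fin k → ↥F, w S := hwsum.symm
        _ ≤ ∑ S : Fin k → ↥F, ∑ x : X,
            (if ¬ (k < 2 * (univ.filter fun m : Fin k => (S m).1 x = L x).card)
              then w S else 0) := by
            apply Finset.sum_le_sum
            intro S _
            obtain ⟨x0, hx0⟩ := hmaj S
            have heq : (if ¬ (k < 2 * (univ.filter fun m : Fin k => (S m).1 x0 = L x0).card)
                then w S else 0) = w S := if_pos hx0
            calc w S = _ := heq.symm
              _ ≤ _ := Finset.single_le_sum (f := fun x =>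
                  (if ¬ (k < 2 * (univ.filter fun m : Fin k => (S m).1 x = L x).card)
                    then w S else 0))
                  (fun x _ => by split <;> simp [hw0 S]) (Finset.mem_univ x0)
        _ = ∑ x : X, ∑ S : Fin k → ↥F,
            (if ¬ (k < 2 * (univ.filter fun m : Fin k => (S m).1 x = L x).card)
              then w S else 0) := Finset.sum_comm
        _ = ∑ x : X, ∑ S ∈ bad x, w S := by
            apply Finset.sum_congr rfl
            intro x _
            rw [hbad, Finset.sum_filter]
    have hlt2 : ∑ x : X, ∑ S ∈ bad x, w S ≤ (Fintype.card X : ℝ) * Real.exp (-(2 * δ' ^ 2 * k)) := by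
      calc ∑ x : X, ∑ S ∈ bad x, w S ≤ ∑ _x : X, Real.exp (-(2 * δ' ^ 2 * k)) := by
            apply Finset.sum_le_sum
            intro x _
            exact bound1 x
        _ = (Fintype.card X : ℝ) * Real.exp (-(2 * δ' ^ 2 * k)) := by
            rw [Finset.sum_const, Finset.card_univ, nsmul_eq_mul]
    have hfin : (Fintype.card X : ℝ) * Real.exp (-(2 * δ' ^ 2 * k)) < 1 := by
      have hnexp : (Fintype.card X : ℝ) = Real.exp lgn := (Real.exp_log (by linarith)).symm
      rw [hnexp, ← Real.exp_add]
      have : lgn + -(2 * δ' ^ 2 * k) < 0 := by linarith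
      calc Real.exp (lgn + -(2 * δ' ^ 2 * k)) < Real.exp 0 := Real.exp_lt_exp.mpr this
        _ = 1 := Real.exp_zero
    linarith
  -- conclude
  have hne : Nonempty (↥F) := ⟨⟨hF.choose, hF.choose_spec⟩⟩
  have hcard : 0 < Fintype.card ↥F := Fintype.card_pos
  have hsimplex : Nonempty (stdSimplex ℝ ↥F) := by
    refine ⟨⟨fun _ => (Fintype.card ↥F : ℝ)⁻¹, fun _ => by positivity, ?_⟩⟩
    rw [Finset.sum_const, Finset.card_univ, nsmul_eq_mul]
    field_simp
  have hinf : 1 / 2 - δ' ≤ ⨅ p : stdSimplex ℝ ↥F, ⨆ x : X,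
      ∑ f : ↥F, p.1 f * (if f.1 x ≠ L x then (1 : ℝ) else 0) := by
    apply le_ciInf
    intro p
    obtain ⟨x, hx⟩ := main p
    exact hx.trans (le_ciSup (f := fun x : X => ∑ f : ↥F, p.1 f * (if f.1 x ≠ L x then (1:ℝ) else 0)) (Set.finite_range _).bddAbove x)
  linarith
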